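/- Let q₀ ∈ ℝ and q_v ∈ ℝ³ satisfy q₀² + ‖q_v‖² = 1 and q₀ ≠ 0, and define the linear map F : ℝ³ → ℝ³ by F v = (1/2)(q₀·v + q_v × v). Then F is bijective and the operator norm of its inverse equals 2/|q₀|. -/

import Mathlib

noncomputable def cross3 (a b : EuclideanSpace ℝ (Fin 3)) : EuclideanSpace ℝ (Fin 3) :=
  (WithLp.equiv 2 (Fin 3 → ℝ)).symm
    (crossProduct ((WithLp.equiv 2 (Fin 3 → ℝ)) a) ((WithLp.equiv 2 (Fin 3 → ℝ)) b))

noncomputable def crossCLM (q : EuclideanSpace ℝ (Fin 3)) :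
    EuclideanSpace ℝ (Fin 3) →L[ℝ] EuclideanSpace ℝ (Fin 3) :=
  LinearMap.toContinuousLinearMap
    ((WithLp.linearEquiv 2 ℝ (Fin 3 → ℝ)).symm.toLinearMap ∘ₗ
      (crossProduct ((WithLp.equiv 2 (Fin 3 → ℝ)) q)) ∘ₗ
      (WithLp.linearEquiv 2 ℝ (Fin 3 → ℝ)).toLinearMap)

set_option maxHeartbeats 2000000 in
theorem attitude_jacobian_inverse_norm (q₀ : ℝ) (qv : EuclideanSpace ℝ (Fin 3))
    (hunit : q₀ ^ 2 + ‖qv‖ ^ 2 = 1) (hq₀ : q₀ ≠ 0)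
    (F : EuclideanSpace ℝ (Fin 3) →L[ℝ] EuclideanSpace ℝ (Fin 3))
    (hF : ∀ v, F v = (1 / 2 : ℝ) • (q₀ • v + cross3 qv v)) :
    Function.Bijective F ∧
      ∃ G : EuclideanSpace ℝ (Fin 3) →L[ℝ] EuclideanSpace ℝ (Fin 3),
        (∀ v, G (F v) = v) ∧ (∀ v, F (G v) = v) ∧ ‖G‖ = 2 / |q₀| := by
  set G : EuclideanSpace ℝ (Fin 3) →L[ℝ] EuclideanSpace ℝ (Fin 3) :=
    (2/q₀) • (q₀^2 • ContinuousLinearMap.id ℝ _ - q₀ • crossCLM qv +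
      (innerSL ℝ qv).smulRight qv) with hGdef
  have normsq : ∀ w : EuclideanSpace ℝ (Fin 3), ‖w‖^2 = w 0^2 + w 1^2 + w 2^2 := by
    intro w
    rw [EuclideanSpace.norm_sq_eq]
    simp [Fin.sum_univ_three]
  have hu : q₀^2 + (qv 0^2 + qv 1^2 + qv 2^2) = 1 := by rw [← normsq]; exact hunit
  have hs : ∀ v : EuclideanSpace ℝ (Fin 3),
      (inner ℝ qv v : ℝ) = qv 0 * v 0 + qv 1 * v 1 + qv 2 * v 2 := by
    intro v; simp [PiLp.inner_apply, Fin.sum_univ_three]; ring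
  have hGi : ∀ (v : EuclideanSpace ℝ (Fin 3)) i, (G v) i =
      2/q₀*(q₀^2 * v i - q₀ * cross3 qv v i + (inner ℝ qv v : ℝ) * qv i) := by
    intro v i
    simp [hGdef, crossCLM, cross3, PiLp.inner_apply]; ring
  have hc0 : ∀ v : EuclideanSpace ℝ (Fin 3), cross3 qv v 0 = qv 1 * v 2 - qv 2 * v 1 := by
    intro v; simp [cross3, cross_apply]
  have hc1 : ∀ v : EuclideanSpace ℝ (Fin 3), cross3 qv v 1 = qv 2 * v 0 - qv 0 * v 2 := by
    intro v; simp [cross3, cross_apply]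
  have hc2 : ∀ v : EuclideanSpace ℝ (Fin 3), cross3 qv v 2 = qv 0 * v 1 - qv 1 * v 0 := by
    intro v; simp [cross3, cross_apply]
  have hFi : ∀ (v : EuclideanSpace ℝ (Fin 3)) i, (F v) i =
      1/2*(q₀ * v i + cross3 qv v i) := by
    intro v i; rw [hF]; simp; ring
  -- G is a left inverse of F
  have hGF : ∀ v, G (F v) = v := by
    intro v
    have e0 : G (F v) 0 = v 0 := by
      rw [hGi, hs]; simp only [hc0, hc1, hc2, hFi]
      field_simp; linear_combination (q₀*v 0) * hu
    have e1 : G (F v) 1 = v 1 := by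
      rw [hGi, hs]; simp only [hc0, hc1, hc2, hFi]
      field_simp; linear_combination (q₀*v 1) * hu
    have e2 : G (F v) 2 = v 2 := by
      rw [hGi, hs]; simp only [hc0, hc1, hc2, hFi]
      field_simp; linear_combination (q₀*v 2) * hu
    ext i
    fin_cases i
    · exact e0
    · exact e1
    · exact e2
  -- G is a right inverse of F
  have hFG : ∀ v, F (G v) = v := by
    intro v
    have e0 : F (G v) 0 = v 0 := by
      rw [hFi]; simp only [hc0, hc1, hc2, hGi, hs]
      field_simp; linear_combination (q₀*v 0) * hu
    have e1 : F (G v) 1 = v 1 := by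
      rw [hFi]; simp only [hc0, hc1, hc2, hGi, hs]
      field_simp; linear_combination (q₀*v 1) * hu
    have e2 : F (G v) 2 = v 2 := by
      rw [hFi]; simp only [hc0, hc1, hc2, hGi, hs]
      field_simp; linear_combination (q₀*v 2) * hu
    ext i
    fin_cases i
    · exact e0
    · exact e1
    · exact e2
  -- key norm identity
  have key : ∀ v : EuclideanSpace ℝ (Fin 3),
      ‖G v‖^2 = 4/q₀^2 * (q₀^2*‖v‖^2 + (inner ℝ qv v : ℝ)^2) := by
    intro v
    rw [normsq (G v), normsq v, hGi v 0, hGi v 1, hGi v 2, hc0, hc1, hc2, hs]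
    field_simp
    linear_combination (4*(q₀^2*(v 0^2+v 1^2+v 2^2) +
      (qv 0*v 0+qv 1*v 1+qv 2*v 2)^2)) * hu
  have habs : |q₀| > 0 := abs_pos.mpr hq₀
  have hq2 : q₀^2 = |q₀|^2 := (sq_abs q₀).symm
  -- upper bound
  have hub : ∀ v : EuclideanSpace ℝ (Fin 3), ‖G v‖ ≤ (2/|q₀|) * ‖v‖ := by
    intro v
    have h2 : (inner ℝ qv v : ℝ)^2 ≤ ‖qv‖^2 * ‖v‖^2 := by
      have := abs_real_inner_le_norm qv v
      nlinarith [abs_nonneg (inner ℝ qv v : ℝ), sq_abs (inner ℝ qv v : ℝ),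
        norm_nonneg qv, norm_nonneg v]
    have h3 : ‖G v‖^2 ≤ ((2/|q₀|) * ‖v‖)^2 := by
      rw [key]
      have he : ((2/|q₀|) * ‖v‖)^2 = 4/q₀^2 * ‖v‖^2 := by
        rw [mul_pow, div_pow, ← hq2]; norm_num
      rw [he]
      have h4 : (0:ℝ) ≤ 4/q₀^2 := by positivity
      have h5 : q₀^2*‖v‖^2 + (inner ℝ qv v : ℝ)^2 ≤ ‖v‖^2 :=
        calc q₀^2*‖v‖^2 + (inner ℝ qv v : ℝ)^2 ≤ q₀^2*‖v‖^2 + ‖qv‖^2*‖v‖^2 := by linarith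
        _ = ‖v‖^2 := by linear_combination ‖v‖^2 * hunit
      exact mul_le_mul_of_nonneg_left h5 h4
    have hb : (0:ℝ) ≤ 2/|q₀| * ‖v‖ := by positivity
    have h6 := Real.sqrt_le_sqrt h3
    rwa [Real.sqrt_sq (norm_nonneg _), Real.sqrt_sq hb] at h6
  -- attaining vector
  have gen : ∀ w : EuclideanSpace ℝ (Fin 3),
      (inner ℝ qv w : ℝ)^2 = ‖qv‖^2 * ‖w‖^2 → ‖G w‖ = (2/|q₀|) * ‖w‖ := by
    intro w hin
    have h3 : ‖G w‖^2 = ((2/|q₀|) * ‖w‖)^2 := by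
      rw [key, hin, mul_pow, div_pow, ← hq2]
      have he : q₀^2*‖w‖^2 + ‖qv‖^2*‖w‖^2 = ‖w‖^2 := by
        linear_combination ‖w‖^2 * hunit
      rw [he]; norm_num
    calc ‖G w‖ = Real.sqrt (‖G w‖^2) := (Real.sqrt_sq (norm_nonneg _)).symm
    _ = (2/|q₀|) * ‖w‖ := by
        rw [h3, Real.sqrt_sq (by positivity)]
  obtain ⟨w, hw0, hweq⟩ : ∃ w : EuclideanSpace ℝ (Fin 3), w ≠ 0 ∧
      ‖G w‖ = (2/|q₀|) * ‖w‖ := by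
    by_cases hqv : qv = 0
    · refine ⟨EuclideanSpace.single 0 (1:ℝ), ?_, gen _ ?_⟩
      · intro h
        have := congrArg (fun x : EuclideanSpace ℝ (Fin 3) => x (0 : Fin 3)) h
        simp [EuclideanSpace.single_apply] at this
      · simp [hqv]
    · refine ⟨qv, hqv, gen _ ?_⟩
      rw [real_inner_self_eq_norm_sq]; ring
  have lb : 2/|q₀| ≤ ‖G‖ := by
    have h := G.ratio_le_opNorm w
    rw [hweq] at h
    have hwpos : (0:ℝ) < ‖w‖ := norm_pos_iff.mpr hw0
    calc 2/|q₀| = (2/|q₀|) * ‖w‖ / ‖w‖ := by field_simp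
    _ ≤ ‖G‖ := h
  refine ⟨Function.bijective_iff_has_inverse.mpr ⟨G, hGF, hFG⟩, G, hGF, hFG, ?_⟩
  exact le_antisymm (G.opNorm_le_bound (by positivity) hub) lb
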